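/- Degeneration decreases rank: Let T be a family of (k+1)-or-larger subsets of [n], let j < n with γ := |{S ∈ T : {n, j} ⊆ S}| > 0, and let T_{n→j} be the degeneration (replace n by j in each member containing n, discarding resulting sets of size ≤ k). If A = {H₁,…,Hₙ} is an arrangement with H_n = H_j (parallel normals) and rank ⋂_{S∈T} D_S(A) ≤ r, then rank ⋂_{S∈T_{n→j}} D_S(A \ H_n) ≤ r − 1, where ranks are codimensions in K^n and K^{n−1} respectively. -/
import Mathlib


variable {K : Type*} [Field K] {ι : Type*} {k : ℕ}

/-- The subspace `D_S` of translation vectors `t` for which the translated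
hyperplanes `{x | ⟨α i, x⟩ = t i}`, `i ∈ S`, have a common point. -/
def DSub (α : ι → Fin k → K) (S : Set ι) : Submodule K (ι → K) where
  carrier := {t | ∃ x : Fin k → K, ∀ i ∈ S, ∑ j, α i j * x j = t i}
  zero_mem' := ⟨0, fun i _ => by simp⟩
  add_mem' := by
    rintro a b ⟨x, hx⟩ ⟨y, hy⟩
    exact ⟨x + y, fun i hi => by simp [mul_add, Finset.sum_add_distrib, hx i hi, hy i hi]⟩
  smul_mem' := by
    rintro c a ⟨x, hx⟩
    refine ⟨c • x, fun i hi => ?_⟩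
    simp only [Pi.smul_apply, smul_eq_mul, ← hx i hi, Finset.mul_sum]
    congr 1; ext j; ring

/-- The degeneration `T_{a→b}` of a family of subsets, viewed in the index set with
`a` deleted: members not containing `a` are kept, and in members containing `a` the
index `a` is replaced by `b`, discarding resulting sets of size `≤ k`. -/
def Degen {n k : ℕ} (T : Set (Set (Fin n))) (a b : Fin n) :
    Set (Set {l : Fin n // l ≠ a}) :=
  {S' | (∃ S ∈ T, a ∉ S ∧ S' = {l : {l : Fin n // l ≠ a} | l.val ∈ S}) ∨
    (∃ S ∈ T, a ∈ S ∧ k + 1 ≤ (insert b (S \ {a})).ncard ∧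
      S' = {l : {l : Fin n // l ≠ a} | l.val ∈ insert b (S \ {a})})}

/-- degeneration decreases rank: let `T` be a family of subsets of
`[n]` each of size `≥ k+1`, `b ≠ a` with `γ = |{S ∈ T : a, b ∈ S}| > 0`, and suppose
the arrangement `A` has parallel hyperplanes `H_a = H_b` (`α a = c • α b`, `c ≠ 0`).
If `rank ⋂_{S∈T} D_S(A) ≤ r` (rank = codimension in `K^n`), then
`rank ⋂_{S'∈T_{a→b}} D_{S'}(A ∖ H_a) ≤ r − 1` (codimension in `K^{n−1}`). -/
theorem degeneration_rank_decrease {K : Type*} [Field K] {n k : ℕ}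
    (α : Fin n → (Fin k → K)) (hα : ∀ l, α l ≠ 0)
    (a b : Fin n) (hab : b ≠ a) (c : K) (hc : c ≠ 0) (hpar : α a = c • α b)
    (T : Set (Set (Fin n))) (hT : ∀ S ∈ T, k + 1 ≤ S.ncard)
    (hγ : ∃ S ∈ T, a ∈ S ∧ b ∈ S)
    (r : ℕ)
    (hr : n - Module.finrank K ↥(⨅ S ∈ T, DSub α S) ≤ r) :
    (n - 1) - Module.finrank K
        ↥(⨅ S' ∈ Degen (k := k) T a b,
          DSub (fun l : {l : Fin n // l ≠ a} => α l.val) S') ≤ r - 1 := by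
  classical
  obtain ⟨S0, hS0T, haS0, hbS0⟩ := hγ
  set W : Submodule K (Fin n → K) := ⨅ S ∈ T, DSub α S with hWdef
  set W' : Submodule K ({l : Fin n // l ≠ a} → K) :=
    ⨅ S' ∈ Degen (k := k) T a b,
      DSub (fun l : {l : Fin n // l ≠ a} => α l.val) S' with hW'def
  have memW : ∀ t ∈ W, ∀ S ∈ T, t ∈ DSub α S := fun t ht S hS =>
    (Submodule.mem_iInf _).1 ((Submodule.mem_iInf _).1 ht S) hS
  have sum_par : ∀ x : Fin k → K, ∑ j, α a j * x j = c * ∑ j, α b j * x j := by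
    intro x
    rw [hpar, Finset.mul_sum]
    refine Finset.sum_congr rfl fun j _ => ?_
    simp [mul_assoc]
  -- key: t ∈ W → t a = c * t b
  have key : ∀ t ∈ W, t a = c * t b := by
    intro t ht
    obtain ⟨x, hx⟩ := memW t ht S0 hS0T
    rw [← hx a haS0, ← hx b hbS0]
    exact sum_par x
  -- restriction maps W into W'
  have hmap : ∀ t ∈ W, (fun l : {l : Fin n // l ≠ a} => t l.val) ∈ W' := by
    intro t ht
    rw [Submodule.mem_iInf]
    intro S'
    rw [Submodule.mem_iInf]
    intro hS'
    rcases hS' with ⟨S, hS, haS, rfl⟩ | ⟨S, hS, haS, hcard, rfl⟩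
    · obtain ⟨x, hx⟩ := memW t ht S hS
      exact ⟨x, fun l hl => hx l.val hl⟩
    · obtain ⟨x, hx⟩ := memW t ht S hS
      refine ⟨x, fun l hl => ?_⟩
      have hl' : l.val = b ∨ l.val ∈ S \ ({a} : Set (Fin n)) := hl
      rcases hl' with hl' | hl'
      · have h1 : ∑ j, α a j * x j = c * t b := by rw [hx a haS]; exact key t ht
        have h2 : c * ∑ j, α b j * x j = c * t b := by rw [← sum_par x]; exact h1
        have h3 : ∑ j, α b j * x j = t b := mul_left_cancel₀ hc h2
        show ∑ j, α l.val j * x j = t l.val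
        rw [hl']; exact h3
      · show ∑ j, α l.val j * x j = t l.val
        exact hx l.val hl'.1
  have hinj : ∀ t ∈ W, (∀ l : {l : Fin n // l ≠ a}, t l.val = 0) → t = 0 := by
    intro t ht h0
    funext i
    by_cases hi : i = a
    · subst hi
      have hb0 : t b = 0 := h0 ⟨b, hab⟩
      simp [key t ht, hb0]
    · simpa using h0 ⟨i, hi⟩
  let f : (Fin n → K) →ₗ[K] ({l : Fin n // l ≠ a} → K) := LinearMap.funLeft K K Subtype.val
  let g : W →ₗ[K] W' := (f.domRestrict W).codRestrict W' (fun t => hmap t t.2)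
  have hginj : Function.Injective g := by
    rw [injective_iff_map_eq_zero]
    intro t ht0
    have h0 : ∀ l : {l : Fin n // l ≠ a}, (t : Fin n → K) l.val = 0 := by
      intro l
      have := congrArg (fun v : W' => (v : {l : Fin n // l ≠ a} → K) l) ht0
      simpa [g, f, LinearMap.funLeft] using this
    exact Subtype.ext (hinj t t.2 h0)
  have h1 : Module.finrank K W ≤ Module.finrank K W' :=
    LinearMap.finrank_le_finrank_of_injective hginj
  have hcard : Fintype.card {l : Fin n // l ≠ a} = n - 1 := by
    rw [Fintype.card_subtype_compl]
    simp
  have h2 : Module.finrank K W' ≤ n - 1 := by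
    have h := Submodule.finrank_le W'
    rwa [Module.finrank_fintype_fun_eq_card, hcard] at h
  have hn : 1 ≤ n := a.pos
  omega
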